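/- Let p and q be probability measures on a measurable space α with p absolutely continuous with respect to q, let ω : α → ℝ be the real-valued Radon–Nikodym derivative of p with respect to q, and let r : α → ℝ be measurable with |r(x)| ≤ R for q-almost every x, where R ≥ 0. Assume ω·r and ω are square-integrable with respect to q. Let N ≥ 1 be a natural number, let q^N be the product measure on Fin N → α of N copies of q, and define the empirical estimator Ŵ(x) = (1/N) · ∑_{i∈Fin N} ω(x i) · r(x i). Then Var_{q^N}(Ŵ) ≤ (R²/N) · ∫ ω² dq. (Lemma 3: the variance of the N-sample marginalized importance weighted estimator is upper bounded by ‖r‖∞²/N times the exponentiated Rényi-2 divergence between p and q.) -/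

import Mathlib

open MeasureTheory
open scoped ENNReal NNReal

section Aux

variable {α : Type*} [MeasurableSpace α] (q : Measure α) [IsProbabilityMeasure q]

lemma aux_map_eval (N : ℕ) (i : Fin N) :
    (Measure.pi fun _ : Fin N => q).map (fun x : Fin N → α => x i) = q := by
  ext s hs
  rw [Measure.map_apply (measurable_pi_apply i) hs]
  have h1 : (fun x : Fin N → α => x i) ⁻¹' s
      = Set.pi Set.univ (Function.update (fun _ : Fin N => Set.univ) i s) :=
    Set.eval_preimage
  rw [h1, Measure.pi_pi]
  rw [Finset.prod_eq_single i]
  · simp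
  · intro j _ hj
    simp [Function.update_of_ne hj]
  · simp

lemma aux_measurePreserving_eval (N : ℕ) (i : Fin N) :
    MeasurePreserving (fun x : Fin N → α => x i)
      (Measure.pi fun _ : Fin N => q) q :=
  ⟨measurable_pi_apply i, aux_map_eval q N i⟩

lemma aux_eval_apply (N : ℕ) (i : Fin N) {s : Set α} (hs : MeasurableSet s) :
    (Measure.pi fun _ : Fin N => q) ((fun x : Fin N → α => x i) ⁻¹' s) = q s := by
  rw [← aux_map_eval q N i, Measure.map_apply (measurable_pi_apply i) hs]
  rw [aux_map_eval q N i]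

lemma aux_indep_eval (N : ℕ) {i j : Fin N} (hij : i ≠ j) :
    ProbabilityTheory.IndepFun (fun x : Fin N → α => x i)
      (fun x : Fin N → α => x j) (Measure.pi fun _ : Fin N => q) := by
  rw [ProbabilityTheory.indepFun_iff_measure_inter_preimage_eq_mul]
  intro s t hs ht
  classical
  have h1 : (fun x : Fin N → α => x i) ⁻¹' s ∩ (fun x : Fin N → α => x j) ⁻¹' t
      = Set.pi Set.univ (fun k => if k = i then s else if k = j then t else Set.univ) := by
    ext x
    simp only [Set.mem_inter_iff, Set.mem_preimage, Set.mem_pi, Set.mem_univ, true_implies]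
    constructor
    · rintro ⟨h1, h2⟩ k
      split_ifs with h h' <;> simp_all
    · intro h
      refine ⟨by simpa using h i, ?_⟩
      have := h j
      rw [if_neg (Ne.symm hij), if_pos rfl] at this
      exact this
  rw [h1, Measure.pi_pi, aux_eval_apply q N i hs, aux_eval_apply q N j ht]
  calc ∏ k : Fin N, q (if k = i then s else if k = j then t else Set.univ)
      = ∏ k ∈ ({i, j} : Finset (Fin N)),
          q (if k = i then s else if k = j then t else Set.univ) := by
        refine (Finset.prod_subset (Finset.subset_univ _) ?_).symm
        intro k _ hk
        simp only [Finset.mem_insert, Finset.mem_singleton, not_or] at hk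
        rw [if_neg hk.1, if_neg hk.2]; simp
    _ = q s * q t := by
        rw [Finset.prod_pair hij, if_pos rfl, if_neg (Ne.symm hij), if_pos rfl]

end Aux

/-- Lemma 3: the variance of the `N`-sample marginalized importance weighted
estimator is upper bounded by `R²/N` times the exponentiated Rényi-2 divergence
between `p` and `q`. -/
theorem variance_empirical_estimator_le
    {α : Type*} [MeasurableSpace α]
    (p q : Measure α) [IsProbabilityMeasure p] [IsProbabilityMeasure q]
    (hpq : p ≪ q)
    (r : α → ℝ) (hr : Measurable r)
    (R : ℝ) (hR : 0 ≤ R) (hbdd : ∀ᵐ x ∂q, |r x| ≤ R)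
    (hwr : Integrable (fun x => ((p.rnDeriv q x).toReal * r x) ^ 2) q)
    (hw : Integrable (fun x => ((p.rnDeriv q x).toReal) ^ 2) q)
    (N : ℕ) (hN : 1 ≤ N) :
    (∫ x : Fin N → α,
        ((1 / (N : ℝ)) * ∑ i : Fin N, (p.rnDeriv q (x i)).toReal * r (x i) -
          ∫ y : Fin N → α,
            (1 / (N : ℝ)) * ∑ i : Fin N, (p.rnDeriv q (y i)).toReal * r (y i)
              ∂(Measure.pi fun _ : Fin N => q)) ^ 2
        ∂(Measure.pi fun _ : Fin N => q)) ≤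
      R ^ 2 / N * ∫ x, ((p.rnDeriv q x).toReal) ^ 2 ∂q := by
  classical
  set ω : α → ℝ := fun a => (p.rnDeriv q a).toReal with hωdef
  set f : α → ℝ := fun a => ω a * r a with hfdef
  set μ : Measure (Fin N → α) := Measure.pi fun _ : Fin N => q with hμdef
  have hωm : Measurable ω := (Measure.measurable_rnDeriv p q).ennreal_toReal
  have hfm : Measurable f := hωm.mul hr
  have hf2 : MemLp f 2 q := (memLp_two_iff_integrable_sq hfm.aestronglyMeasurable).2 hwr
  set X : Fin N → (Fin N → α) → ℝ := fun i x => f (x i) with hXdef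
  have hXm : ∀ i, MemLp (X i) 2 μ := fun i =>
    hf2.comp_measurePreserving (aux_measurePreserving_eval q N i)
  have hpair : Set.Pairwise ↑(Finset.univ : Finset (Fin N))
      fun i j => ProbabilityTheory.IndepFun (X i) (X j) μ := by
    intro i _ j _ hij
    exact (aux_indep_eval q N hij).comp hfm hfm
  have hsum : ProbabilityTheory.variance (∑ i, X i) μ
      = ∑ i : Fin N, ProbabilityTheory.variance (X i) μ :=
    ProbabilityTheory.IndepFun.variance_sum (fun i _ => hXm i) hpair
  have hvarX : ∀ i, ProbabilityTheory.variance (X i) μ = ProbabilityTheory.variance f q := by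
    intro i
    have hmean : (∫ x, X i x ∂μ) = ∫ y, f y ∂q := by
      conv_rhs => rw [← aux_map_eval q N i]
      rw [integral_map (measurable_pi_apply i).aemeasurable hfm.aestronglyMeasurable]
    rw [ProbabilityTheory.variance, ProbabilityTheory.variance,
      ProbabilityTheory.evariance, ProbabilityTheory.evariance]
    congr 1
    rw [hmean]
    set c := ∫ y, f y ∂q with hc
    have hg : Measurable fun y : α => ‖f y - c‖ₑ ^ 2 :=
      ((hfm.sub measurable_const).enorm).pow_const 2
    have : (∫⁻ y, ‖f y - c‖ₑ ^ 2 ∂q)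
        = ∫⁻ x, ‖f (x i) - c‖ₑ ^ 2 ∂μ := by
      conv_lhs => rw [← aux_map_eval q N i]
      rw [lintegral_map hg (measurable_pi_apply i)]
    rw [this]
  set Y : (Fin N → α) → ℝ := fun x => (1 / (N : ℝ)) * ∑ i, X i x with hYdef
  have hYeq : Y = fun x => 1 / (N : ℝ) * (∑ i, X i) x := by
    funext x; simp [hYdef, Finset.sum_apply]
  have hY2 : MemLp Y 2 μ := by
    have h1 : MemLp (∑ i, X i) 2 μ := memLp_finsetSum' _ (fun i _ => hXm i)
    have h2 := h1.const_mul (1 / (N : ℝ))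
    rw [hYeq]; exact h2
  have hLHS : (∫ x : Fin N → α, (Y x - ∫ y, Y y ∂μ) ^ 2 ∂μ)
      = ProbabilityTheory.variance Y μ := by
    rw [ProbabilityTheory.variance_eq_integral hY2.aestronglyMeasurable.aemeasurable]
  have hvarY : ProbabilityTheory.variance Y μ
      = (1 / (N : ℝ)) ^ 2 * ProbabilityTheory.variance (∑ i, X i) μ := by
    rw [hYeq]
    exact ProbabilityTheory.variance_const_mul (1 / (N : ℝ)) (∑ i, X i) μ
  have hN0 : (0 : ℝ) < N := by exact_mod_cast Nat.lt_of_lt_of_le Nat.zero_lt_one hN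
  have hvar_f_le : ProbabilityTheory.variance f q ≤ R ^ 2 * ∫ x, ω x ^ 2 ∂q := by
    have h1 : ProbabilityTheory.variance f q ≤ ∫ x, f x ^ 2 ∂q := by
      have := ProbabilityTheory.variance_le_expectation_sq (μ := q)
        hfm.aestronglyMeasurable
      simpa using this
    refine h1.trans ?_
    have h2 : (∫ x, f x ^ 2 ∂q) ≤ ∫ x, R ^ 2 * ω x ^ 2 ∂q := by
      refine integral_mono_ae hwr (hw.const_mul _) ?_
      filter_upwards [hbdd] with x hx
      have hω0 : 0 ≤ ω x := ENNReal.toReal_nonneg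
      have : f x ^ 2 = ω x ^ 2 * r x ^ 2 := by rw [hfdef]; ring
      rw [this, mul_comm (R ^ 2)]
      refine mul_le_mul_of_nonneg_left ?_ (sq_nonneg _)
      calc r x ^ 2 = |r x| ^ 2 := (sq_abs _).symm
        _ ≤ R ^ 2 := pow_le_pow_left₀ (abs_nonneg _) hx 2
    simpa [integral_const_mul] using h2
  have key : (∫ x : Fin N → α, (Y x - ∫ y, Y y ∂μ) ^ 2 ∂μ)
      ≤ R ^ 2 / N * ∫ x, ω x ^ 2 ∂q := by
    rw [hLHS, hvarY, hsum]
    have hsumval : (∑ i : Fin N, ProbabilityTheory.variance (X i) μ)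
        = N * ProbabilityTheory.variance f q := by
      simp [hvarX, Finset.sum_const, nsmul_eq_mul]
    rw [hsumval]
    have : (1 / (N : ℝ)) ^ 2 * ((N : ℝ) * ProbabilityTheory.variance f q)
        = ProbabilityTheory.variance f q / N := by
      field_simp
    rw [this]
    rw [div_le_iff₀ hN0] at *
    calc ProbabilityTheory.variance f q ≤ R ^ 2 * ∫ x, ω x ^ 2 ∂q := hvar_f_le
      _ = R ^ 2 / ↑N * (∫ x, ω x ^ 2 ∂q) * ↑N := by field_simp
  exact key
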